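/- Let K be a field, X* = A_1 × ... × A_n ⊂ K^n with 2 ≤ d_i = |A_i| ≤ d_{i+1} for all i, and let d satisfy 1 ≤ d ≤ Σ_{i=1}^{n}(d_i − 1) − 1, with the unique decomposition d = Σ_{i=1}^{k}(d_i − 1) + ℓ, 1 ≤ ℓ ≤ d_{k+1} − 1, k ≥ 0. Then the minimum distance of the cartesian evaluation code C_{X*}(d) equals (d_{k+1} − ℓ) · d_{k+2} ⋯ d_n. -/

import Mathlib

open Finset

def feasibleKL {n : ℕ} (c : Fin n → ℕ) (D : ℕ) (y : Fin n → ℕ) : Prop :=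
  (∀ i, 1 ≤ y i ∧ y i ≤ c i) ∧ ∑ i, c i ≤ D + ∑ i, y i

lemma SL_lemma {ι : Type*} [DecidableEq ι] (c y : ι → ℕ) (m : ℕ) :
    ∀ (T : Finset ι) (S : ℕ), (∀ i ∈ T, m ≤ c i) → (∀ i ∈ T, y i ≤ c i) →
    (∑ i ∈ T, c i ≤ S + ∑ i ∈ T, y i) → S ≤ m →
    m * ∏ i ∈ T, c i ≤ m * ∏ i ∈ T, y i + S * ∏ i ∈ T, c i := by
  intro T
  induction T using Finset.induction with
  | empty => intro S _ _ _ _; simp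
  | @insert t T' ht IH =>
    intro S hm hy hsum hS
    have hyc : ∑ i ∈ T', y i ≤ ∑ i ∈ T', c i :=
      Finset.sum_le_sum fun i hi => hy i (Finset.mem_insert_of_mem hi)
    rw [Finset.sum_insert ht, Finset.sum_insert ht] at hsum
    have hyt : y t ≤ c t := hy t (Finset.mem_insert_self t T')
    have hmt : m ≤ c t := hm t (Finset.mem_insert_self t T')
    set s := c t - y t with hs
    have hsS : s ≤ S := by omega
    set S' := S - s with hS'
    have IH' := IH S' (fun i hi => hm i (Finset.mem_insert_of_mem hi))
      (fun i hi => hy i (Finset.mem_insert_of_mem hi)) (by omega) (by omega)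
    rw [Finset.prod_insert ht, Finset.prod_insert ht]
    set P' := ∏ i ∈ T', c i
    set Q' := ∏ i ∈ T', y i
    have h1 : y t * (m * P') ≤ y t * (m * Q' + S' * P') := Nat.mul_le_mul_left _ IH'
    have h2 : m ≤ S' + (y t + s) := by omega
    have hmul : s * m * P' ≤ s * (S' + (y t + s)) * P' :=
      Nat.mul_le_mul_right P' (Nat.mul_le_mul_left s h2)
    have hct : c t = y t + s := by omega
    have hSt : S = S' + s := by omega
    rw [hct, hSt]
    nlinarith [h1, hmul]

-- helper: sum/prod over univ with two updates
lemma sum_update2 {n : ℕ} (y : Fin n → ℕ) {i j : Fin n} (hij : i ≠ j) (a b : ℕ) :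
    ∑ t, Function.update (Function.update y i a) j b t
      = a + b + ∑ t ∈ (univ.erase i).erase j, y t := by
  have hji : j ∈ (univ : Finset (Fin n)).erase i := by simp [hij.symm]
  rw [← Finset.add_sum_erase _ _ (mem_univ i), ← Finset.add_sum_erase _ _ hji]
  have h1 : Function.update (Function.update y i a) j b i = a := by
    rw [Function.update_of_ne hij, Function.update_self]
  have h2 : Function.update (Function.update y i a) j b j = b := Function.update_self _ _ _
  have h3 : ∀ t ∈ (univ.erase i).erase j,
      Function.update (Function.update y i a) j b t = y t := by
    intro t ht
    simp only [mem_erase] at ht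
    rw [Function.update_of_ne ht.1, Function.update_of_ne ht.2.1]
  rw [h1, h2, Finset.sum_congr rfl h3, ← add_assoc]

lemma prod_update2 {n : ℕ} (y : Fin n → ℕ) {i j : Fin n} (hij : i ≠ j) (a b : ℕ) :
    ∏ t, Function.update (Function.update y i a) j b t
      = a * b * ∏ t ∈ (univ.erase i).erase j, y t := by
  have hji : j ∈ (univ : Finset (Fin n)).erase i := by simp [hij.symm]
  rw [← Finset.mul_prod_erase _ _ (mem_univ i), ← Finset.mul_prod_erase _ _ hji]
  have h1 : Function.update (Function.update y i a) j b i = a := by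
    rw [Function.update_of_ne hij, Function.update_self]
  have h2 : Function.update (Function.update y i a) j b j = b := Function.update_self _ _ _
  have h3 : ∀ t ∈ (univ.erase i).erase j,
      Function.update (Function.update y i a) j b t = y t := by
    intro t ht
    simp only [mem_erase] at ht
    rw [Function.update_of_ne ht.1, Function.update_of_ne ht.2.1]
  rw [h1, h2, Finset.prod_congr rfl h3, ← mul_assoc]

lemma prod_split2 {n : ℕ} (y : Fin n → ℕ) {i j : Fin n} (hij : i ≠ j) :
    ∏ t, y t = y i * y j * ∏ t ∈ (univ.erase i).erase j, y t := by
  have h := prod_update2 y hij (y i) (y j)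
  rw [Function.update_eq_self, Function.update_eq_self] at h
  exact h

lemma sum_split2 {n : ℕ} (y : Fin n → ℕ) {i j : Fin n} (hij : i ≠ j) :
    ∑ t, y t = y i + y j + ∑ t ∈ (univ.erase i).erase j, y t := by
  have h := sum_update2 y hij (y i) (y j)
  rw [Function.update_eq_self, Function.update_eq_self] at h
  exact h

lemma sum_filter_update2 {n : ℕ} (y : Fin n → ℕ) {s : Finset (Fin n)} {i j : Fin n}
    (hi : i ∈ s) (hj : j ∉ s) (a b : ℕ) :
    ∑ t ∈ s, Function.update (Function.update y i a) j b t = a + ∑ t ∈ s.erase i, y t := by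
  have hij : i ≠ j := fun h => hj (h ▸ hi)
  rw [← Finset.add_sum_erase s _ hi]
  congr 1
  · rw [Function.update_of_ne hij, Function.update_self]
  · refine Finset.sum_congr rfl fun t ht => ?_
    simp only [mem_erase] at ht
    rw [Function.update_of_ne (fun h => hj (by rw [← h]; exact ht.2)), Function.update_of_ne ht.1]

lemma erase_Tk {n k : ℕ} (hk : k < n) :
    ((univ.filter (fun i : Fin n => ¬ (i : ℕ) < k)).erase ⟨k, hk⟩)
      = univ.filter (fun i : Fin n => k < (i : ℕ)) := by
  ext t
  simp only [mem_erase, mem_filter, mem_univ, true_and, Ne, Fin.ext_iff]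
  omega

lemma value_T1 {n : ℕ} (c : Fin n → ℕ) (k ℓ : ℕ) (hk : k < n)
    (hmono : ∀ i j : Fin n, i ≤ j → c i ≤ c j)
    (hl : ℓ + 1 ≤ c ⟨k, hk⟩) (y : Fin n → ℕ)
    (hfeas : feasibleKL c ((∑ i ∈ univ.filter (fun i : Fin n => (i : ℕ) < k), (c i - 1)) + ℓ) y)
    (hone : ∀ i ∈ univ.filter (fun i : Fin n => (i : ℕ) < k), y i = 1) :
    (c ⟨k, hk⟩ - ℓ) * ∏ i ∈ univ.filter (fun i : Fin n => k < (i : ℕ)), c i ≤ ∏ i, y i := by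
  classical
  set Sk := univ.filter (fun i : Fin n => (i : ℕ) < k) with hSk
  set Tk := univ.filter (fun i : Fin n => ¬ (i : ℕ) < k) with hTk
  set m := c ⟨k, hk⟩ with hm
  obtain ⟨hbnd, hsum⟩ := hfeas
  -- sum over Sk of (c i - 1) plus card equals sum of c i
  have hc1 : ∀ i ∈ Sk, 1 ≤ c i := fun i _ => le_trans (hbnd i).1 (hbnd i).2
  have hsum_c : (∑ i ∈ Sk, (c i - 1)) + Sk.card = ∑ i ∈ Sk, c i := by
    have h : ∑ i ∈ Sk, c i = ∑ i ∈ Sk, ((c i - 1) + 1) :=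
      Finset.sum_congr rfl fun i hi => (Nat.sub_add_cancel (hc1 i hi)).symm
    rw [h, Finset.sum_add_distrib]
    simp
  have hsplit_c : ∑ i ∈ Sk, c i + ∑ i ∈ Tk, c i = ∑ i, c i :=
    Finset.sum_filter_add_sum_filter_not univ _ c
  have hsplit_y : ∑ i ∈ Sk, y i + ∑ i ∈ Tk, y i = ∑ i, y i :=
    Finset.sum_filter_add_sum_filter_not univ _ y
  have hSky : ∑ i ∈ Sk, y i = Sk.card := by
    rw [Finset.sum_congr rfl hone]; simp
  have hTsum : ∑ i ∈ Tk, c i ≤ ℓ + ∑ i ∈ Tk, y i := by omega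
  have hSL := SL_lemma c y m Tk ℓ
    (fun i hi => by
      simp only [hTk, mem_filter, mem_univ, true_and, not_lt] at hi
      exact hmono ⟨k, hk⟩ i (by simpa [Fin.le_def] using hi))
    (fun i _ => (hbnd i).2) hTsum (by omega)
  -- products
  have hky : (⟨k, hk⟩ : Fin n) ∈ Tk := by simp [hTk]
  have hTc : ∏ i ∈ Tk, c i = m * ∏ i ∈ univ.filter (fun i : Fin n => k < (i : ℕ)), c i := by
    rw [← Finset.mul_prod_erase Tk c hky, erase_Tk hk]
  have hprodsplit : (∏ i ∈ Sk, y i) * ∏ i ∈ Tk, y i = ∏ i, y i :=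
    Finset.prod_filter_mul_prod_filter_not univ _ y
  have hSky1 : ∏ i ∈ Sk, y i = 1 := Finset.prod_eq_one hone
  set P := ∏ i ∈ univ.filter (fun i : Fin n => k < (i : ℕ)), c i
  set Q := ∏ i ∈ Tk, y i
  have hyQ : ∏ i, y i = Q := by rw [← hprodsplit, hSky1, one_mul]
  rw [hyQ]
  have hmain : m * ((m - ℓ) * P) ≤ m * Q := by
    have h1 : (m - ℓ) * (m * P) ≤ m * Q := by
      rw [Nat.sub_mul]
      have := hSL
      rw [hTc] at this
      omega
    calc m * ((m - ℓ) * P) = (m - ℓ) * (m * P) := by ring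
    _ ≤ m * Q := h1
  exact Nat.le_of_mul_le_mul_left hmain (by omega)

lemma value_T2 {n : ℕ} (c : Fin n → ℕ) (k ℓ : ℕ) (hk : k < n)
    (y : Fin n → ℕ)
    (hbnd : ∀ i, 1 ≤ y i ∧ y i ≤ c i)
    (hfull : ∀ j ∈ univ.filter (fun i : Fin n => ¬ (i : ℕ) < k), y j = c j) :
    (c ⟨k, hk⟩ - ℓ) * ∏ i ∈ univ.filter (fun i : Fin n => k < (i : ℕ)), c i ≤ ∏ i, y i := by
  classical
  set Tk := univ.filter (fun i : Fin n => ¬ (i : ℕ) < k) with hTk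
  have hky : (⟨k, hk⟩ : Fin n) ∈ Tk := by simp [hTk]
  have hTc : ∏ i ∈ Tk, c i = c ⟨k, hk⟩ * ∏ i ∈ univ.filter (fun i : Fin n => k < (i : ℕ)), c i := by
    rw [← Finset.mul_prod_erase Tk c hky, erase_Tk hk]
  have h1 : ∏ i ∈ Tk, y i = ∏ i ∈ Tk, c i := Finset.prod_congr rfl hfull
  have h2 : ∏ i ∈ Tk, y i ≤ ∏ i, y i := by
    refine Finset.prod_le_prod_of_subset_of_one_le' (Finset.subset_univ Tk) ?_
    intro i _ _; exact (hbnd i).1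
  calc (c ⟨k, hk⟩ - ℓ) * ∏ i ∈ univ.filter (fun i : Fin n => k < (i : ℕ)), c i
      ≤ c ⟨k, hk⟩ * ∏ i ∈ univ.filter (fun i : Fin n => k < (i : ℕ)), c i :=
        Nat.mul_le_mul_right _ (Nat.sub_le _ _)
    _ = ∏ i ∈ Tk, c i := hTc.symm
    _ = ∏ i ∈ Tk, y i := h1.symm
    _ ≤ ∏ i, y i := h2

lemma value_ge {n : ℕ} (c : Fin n → ℕ) (k ℓ : ℕ) (hk : k < n)
    (hmono : ∀ i j : Fin n, i ≤ j → c i ≤ c j)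
    (hl : ℓ + 1 ≤ c ⟨k, hk⟩) (y : Fin n → ℕ)
    (hfeas : feasibleKL c ((∑ i ∈ univ.filter (fun i : Fin n => (i : ℕ) < k), (c i - 1)) + ℓ) y) :
    (c ⟨k, hk⟩ - ℓ) * ∏ i ∈ univ.filter (fun i : Fin n => k < (i : ℕ)), c i ≤ ∏ i, y i := by
  classical
  suffices H : ∀ (N : ℕ) (y : Fin n → ℕ),
      feasibleKL c ((∑ i ∈ univ.filter (fun i : Fin n => (i : ℕ) < k), (c i - 1)) + ℓ) y →
      (∑ i ∈ univ.filter (fun i : Fin n => (i : ℕ) < k), y i) ≤ N →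
      (c ⟨k, hk⟩ - ℓ) * ∏ i ∈ univ.filter (fun i : Fin n => k < (i : ℕ)), c i ≤ ∏ i, y i by
    exact H _ y hfeas le_rfl
  intro N
  induction N with
  | zero =>
    intro y hf hM
    refine value_T1 c k ℓ hk hmono hl y hf fun i hi => ?_
    have h1 := Finset.single_le_sum (f := y) (fun t _ => Nat.zero_le _) hi
    have h2 := (hf.1 i).1
    omega
  | succ N IH =>
    intro y hf hM
    set Sk := univ.filter (fun i : Fin n => (i : ℕ) < k) with hSk
    by_cases hone : ∀ i ∈ Sk, y i = 1
    · exact value_T1 c k ℓ hk hmono hl y hf hone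
    push_neg at hone
    obtain ⟨i, hiSk, hyi⟩ := hone
    have hyi2 : 2 ≤ y i := by have := (hf.1 i).1; omega
    by_cases hfull : ∀ j ∈ univ.filter (fun t : Fin n => ¬ (t : ℕ) < k), y j = c j
    · exact value_T2 c k ℓ hk y hf.1 hfull
    push_neg at hfull
    obtain ⟨j, hjTk, hyj⟩ := hfull
    have hyjc : y j < c j := lt_of_le_of_ne (hf.1 j).2 hyj
    have hik : (i : ℕ) < k := by simpa [hSk] using hiSk
    have hjk : ¬ (j : ℕ) < k := by simpa using hjTk
    have hij : i ≠ j := fun h => hjk (h ▸ hik)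
    have hijle : i ≤ j := Fin.le_def.mpr (by omega)
    have hjSk : j ∉ Sk := by simp [hSk, hjk]
    obtain ⟨hbnd, hsum⟩ := hf
    by_cases hcase : y i ≤ y j + 1
    · -- exchange
      set y' := Function.update (Function.update y i (y i - 1)) j (y j + 1) with hy'
      have hbnd' : ∀ t, 1 ≤ y' t ∧ y' t ≤ c t := by
        intro t
        rcases eq_or_ne t j with rfl | htj
        · simp only [hy', Function.update_self]; omega
        rcases eq_or_ne t i with rfl | hti
        · simp only [hy', Function.update_of_ne hij, Function.update_self]
          exact ⟨by omega, le_trans (Nat.sub_le _ _) (hbnd t).2⟩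
        · simp only [hy', Function.update_of_ne htj, Function.update_of_ne hti]
          exact hbnd t
      have hsumeq : ∑ t, y' t = ∑ t, y t := by
        rw [hy', sum_update2 y hij, sum_split2 y hij]
        omega
      have hfeas' : feasibleKL c ((∑ t ∈ Sk, (c t - 1)) + ℓ) y' :=
        ⟨hbnd', by rw [hsumeq]; exact hsum⟩
      have hM' : ∑ t ∈ Sk, y' t ≤ N := by
        rw [hy', sum_filter_update2 y hiSk hjSk]
        rw [← Finset.add_sum_erase Sk y hiSk] at hM
        omega
      have hIH := IH y' hfeas' hM'
      have hprodle : ∏ t, y' t ≤ ∏ t, y t := by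
        rw [hy', prod_update2 y hij, prod_split2 y hij]
        refine Nat.mul_le_mul_right _ ?_
        obtain ⟨a', ha'⟩ : ∃ a', y i = a' + 1 := ⟨y i - 1, by omega⟩
        rw [ha']
        simp only [Nat.add_sub_cancel]
        rw [Nat.mul_add, Nat.add_mul, mul_one, one_mul]
        have : a' ≤ y j := by omega
        nlinarith [this]
      exact le_trans hIH hprodle
    · -- swap
      set y' := Function.update (Function.update y i (y j)) j (y i) with hy'
      have hbnd' : ∀ t, 1 ≤ y' t ∧ y' t ≤ c t := by
        intro t
        rcases eq_or_ne t j with rfl | htj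
        · simp only [hy', Function.update_self]
          exact ⟨(hbnd i).1, le_trans (hbnd i).2 (hmono i t hijle)⟩
        rcases eq_or_ne t i with rfl | hti
        · simp only [hy', Function.update_of_ne hij, Function.update_self]
          exact ⟨(hbnd j).1, by have := (hbnd t).2; omega⟩
        · simp only [hy', Function.update_of_ne htj, Function.update_of_ne hti]
          exact hbnd t
      have hsumeq : ∑ t, y' t = ∑ t, y t := by
        rw [hy', sum_update2 y hij, sum_split2 y hij]
        omega
      have hfeas' : feasibleKL c ((∑ t ∈ Sk, (c t - 1)) + ℓ) y' :=
        ⟨hbnd', by rw [hsumeq]; exact hsum⟩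
      have hM' : ∑ t ∈ Sk, y' t ≤ N := by
        rw [hy', sum_filter_update2 y hiSk hjSk]
        rw [← Finset.add_sum_erase Sk y hiSk] at hM
        omega
      have hIH := IH y' hfeas' hM'
      have hprodle : ∏ t, y' t = ∏ t, y t := by
        rw [hy', prod_update2 y hij, prod_split2 y hij]
        ring
      exact le_trans hIH (le_of_eq hprodle)

open Polynomial in
lemma RED {K : Type*} [Field K] {n : ℕ} (c : ℕ) (hc : 1 ≤ c)
    (v : Polynomial (MvPolynomial (Fin n) K)) (hv : v.Monic) (hvdeg : v.natDegree = c)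
    (hvcoeff : ∀ j, (v.coeff j).totalDegree = 0) (d : ℕ) (F : Polynomial (MvPolynomial (Fin n) K))
    (hWD : ∀ j, F.coeff j ≠ 0 → (F.coeff j).totalDegree + j ≤ d) :
    ∃ Q R : Polynomial (MvPolynomial (Fin n) K), F = Q * v + R ∧ R.natDegree < c ∧
      ∀ j, R.coeff j ≠ 0 → (R.coeff j).totalDegree + j ≤ d := by
  suffices H : ∀ (N : ℕ) (F : Polynomial (MvPolynomial (Fin n) K)), F.natDegree ≤ N →
      (∀ j, F.coeff j ≠ 0 → (F.coeff j).totalDegree + j ≤ d) →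
      ∃ Q R : Polynomial (MvPolynomial (Fin n) K), F = Q * v + R ∧ R.natDegree < c ∧
        ∀ j, R.coeff j ≠ 0 → (R.coeff j).totalDegree + j ≤ d by
    exact H F.natDegree F le_rfl hWD
  intro N
  induction N using Nat.strong_induction_on with
  | _ N IH =>
    intro F hFN hWD
    by_cases hdeg : F.natDegree < c
    · exact ⟨0, F, by rw [zero_mul, zero_add], hdeg, hWD⟩
    push_neg at hdeg
    have hF0 : F ≠ 0 := by
      intro h
      rw [h, natDegree_zero] at hdeg
      omega
    set nd := F.natDegree with hnd
    set lc := F.coeff nd with hlc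
    have hlc0 : lc ≠ 0 := by
      rw [hlc, hnd]
      exact leadingCoeff_ne_zero.mpr hF0
    set e := nd - c with he
    set w := v * Polynomial.X ^ e with hw
    have hwmonic : w.Monic := hv.mul (monic_X_pow e)
    have hwdeg : w.natDegree = nd := by
      rw [hw, Polynomial.natDegree_mul' (by simp [hv.leadingCoeff]), hvdeg,
        natDegree_X_pow]
      omega
    set G := Polynomial.C lc * w with hG
    have hGcoeff : ∀ j, G.coeff j = lc * (if e ≤ j then v.coeff (j - e) else 0) := by
      intro j
      rw [hG, Polynomial.coeff_C_mul, hw, Polynomial.coeff_mul_X_pow']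
    have hGnd : G.coeff nd = lc := by
      rw [hGcoeff, if_pos (by omega)]
      have : nd - e = c := by omega
      rw [this, show v.coeff c = 1 from hvdeg ▸ hv.coeff_natDegree, mul_one]
    have hGhigh : ∀ j, nd < j → G.coeff j = 0 := by
      intro j hj
      rw [hGcoeff]
      rcases le_or_gt e j with h | h
      · rw [if_pos h, Polynomial.coeff_eq_zero_of_natDegree_lt (by omega : v.natDegree < j - e),
          mul_zero]
      · rw [if_neg (by omega), mul_zero]
    have hGWD : ∀ j, G.coeff j ≠ 0 → (G.coeff j).totalDegree + j ≤ d := by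
      intro j hj
      have hjnd : j ≤ nd := by
        by_contra h
        exact hj (hGhigh j (by omega))
      have h1 : (G.coeff j).totalDegree ≤ lc.totalDegree := by
        rw [hGcoeff]
        rcases le_or_gt e j with h | h
        · rw [if_pos h]
          exact le_trans (MvPolynomial.totalDegree_mul _ _) (by rw [hvcoeff]; omega)
        · rw [if_neg (by omega)]
          simp
      have h2 : lc.totalDegree + nd ≤ d := hWD nd hlc0
      omega
    set F' := F - G with hF'
    have hF'WD : ∀ j, F'.coeff j ≠ 0 → (F'.coeff j).totalDegree + j ≤ d := by
      intro j hj
      rw [hF', Polynomial.coeff_sub] at hj ⊢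
      have := MvPolynomial.totalDegree_sub (F.coeff j) (G.coeff j)
      rcases max_cases (F.coeff j).totalDegree (G.coeff j).totalDegree with ⟨h, _⟩ | ⟨h, _⟩
      · by_cases hF0' : F.coeff j = 0
        · have : G.coeff j ≠ 0 := by
            intro hG0
            exact hj (by rw [hF0', hG0, sub_zero])
          have := hGWD j this
          have h0 : (F.coeff j).totalDegree = 0 := by rw [hF0']; simp
          omega
        · have := hWD j hF0'
          omega
      · by_cases hG0' : G.coeff j = 0
        · have : F.coeff j ≠ 0 := by
            intro hF0''
            exact hj (by rw [hF0'', hG0', sub_zero])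
          have := hWD j this
          have h0 : (G.coeff j).totalDegree = 0 := by rw [hG0']; simp
          omega
        · have := hGWD j hG0'
          omega
    by_cases hF'0 : F' = 0
    · refine ⟨Polynomial.C lc * Polynomial.X ^ e, 0, ?_, by rw [natDegree_zero]; omega, by simp⟩
      have : F = G := by
        have := sub_eq_zero.mp (hF' ▸ hF'0)
        exact this
      rw [this, add_zero, hG, hw]
      ring
    · have hF'deg : F'.natDegree < nd := by
        rw [Polynomial.natDegree_lt_iff_degree_lt hF'0]
        rw [Polynomial.degree_lt_iff_coeff_zero]
        intro m hm
        have hm' : nd ≤ m := by exact_mod_cast hm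
        rw [hF', Polynomial.coeff_sub]
        rcases eq_or_lt_of_le hm' with rfl | h
        · rw [hGnd, ← hlc, sub_self]
        · rw [hGhigh m h, Polynomial.coeff_eq_zero_of_natDegree_lt (by omega), sub_zero]
      obtain ⟨Q', R', hQR, hRdeg, hRWD⟩ := IH F'.natDegree (by omega) F' le_rfl hF'WD
      refine ⟨Q' + Polynomial.C lc * Polynomial.X ^ e, R', ?_, hRdeg, hRWD⟩
      have : F = F' + G := by rw [hF']; ring
      rw [this, hQR, hG, hw]
      ring

open MvPolynomial in
lemma AF {K : Type*} [Field K] [DecidableEq K] : ∀ (n : ℕ) (A : Fin n → Finset K),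
    (∀ i, 1 ≤ (A i).card) → ∀ (f : MvPolynomial (Fin n) K) (d : ℕ), f.totalDegree ≤ d →
    (∃ x ∈ Fintype.piFinset A, MvPolynomial.eval x f ≠ 0) →
    ∃ y : Fin n → ℕ, feasibleKL (fun i => (A i).card) d y ∧
      ∏ i, y i ≤ ((Fintype.piFinset A).filter fun x => MvPolynomial.eval x f ≠ 0).card := by
  intro n
  induction n with
  | zero =>
    intro A _ f d _ hnz
    obtain ⟨x, hx, hfx⟩ := hnz
    refine ⟨fun i => i.elim0, ⟨fun i => i.elim0, by simp⟩, ?_⟩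
    simpa using Finset.card_pos.mpr ⟨x, Finset.mem_filter.mpr ⟨hx, hfx⟩⟩
  | succ n IHn =>
    intro A hA1 f d hdeg hnz
    classical
    set A' : Fin n → Finset K := fun i => A i.succ with hA'
    set c0 := (A 0).card with hc0
    have hc01 : 1 ≤ c0 := hA1 0
    -- the vanishing polynomial of A 0
    set v₀ : Polynomial K := ∏ a ∈ A 0, (Polynomial.X - Polynomial.C a) with hv₀
    have hv₀monic : v₀.Monic :=
      Polynomial.monic_prod_of_monic _ _ fun a _ => Polynomial.monic_X_sub_C a
    have hv₀deg : v₀.natDegree = c0 := by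
      rw [hv₀, Polynomial.natDegree_prod _ _ fun a _ => Polynomial.X_sub_C_ne_zero a]
      simp [Polynomial.natDegree_X_sub_C, hc0]
    set v : Polynomial (MvPolynomial (Fin n) K) := v₀.map MvPolynomial.C with hv
    have hvmonic : v.Monic := hv₀monic.map _
    have hvdeg : v.natDegree = c0 := by rw [hv, hv₀monic.natDegree_map, hv₀deg]
    have hvcoeff : ∀ j, (v.coeff j).totalDegree = 0 := by
      intro j
      rw [hv, Polynomial.coeff_map, MvPolynomial.totalDegree_C]
    set F := finSuccEquiv K n f with hF
    have hFWD : ∀ j, F.coeff j ≠ 0 → (F.coeff j).totalDegree + j ≤ d := fun j hj =>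
      le_trans (totalDegree_coeff_finSuccEquiv_add_le f j hj) hdeg
    obtain ⟨Q, R, hQR, hRdeg, hRWD⟩ := RED c0 hc01 v hvmonic hvdeg hvcoeff d F hFWD
    -- values of f on the grid are computed from R
    have hvmap : ∀ u : Fin n → K, v.map (MvPolynomial.eval u) = v₀ := by
      intro u
      rw [hv, Polynomial.map_map]
      have : (MvPolynomial.eval u).comp MvPolynomial.C = RingHom.id K := by
        ext x
        simp
      rw [this, Polynomial.map_id]
    have hv₀eval : ∀ a ∈ A 0, Polynomial.eval a v₀ = 0 := by
      intro a ha
      rw [hv₀, Polynomial.eval_prod]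
      exact Finset.prod_eq_zero ha (by simp)
    have hval : ∀ a ∈ A 0, ∀ u : Fin n → K,
        MvPolynomial.eval (Fin.cons a u) f = Polynomial.eval a (R.map (MvPolynomial.eval u)) := by
      intro a ha u
      rw [eval_eq_eval_mv_eval', ← hF, hQR, Polynomial.map_add, Polynomial.map_mul,
        Polynomial.eval_add, Polynomial.eval_mul, hvmap, hv₀eval a ha, mul_zero, zero_add]
    -- index e : largest coefficient index not vanishing identically on the subgrid
    set J := (Finset.range (R.natDegree + 1)).filter
      (fun j => ∃ u ∈ Fintype.piFinset A', MvPolynomial.eval u (R.coeff j) ≠ 0) with hJ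
    have hJne : J.Nonempty := by
      obtain ⟨x, hx, hfx⟩ := hnz
      have ha : x 0 ∈ A 0 := Fintype.mem_piFinset.mp hx 0
      have hu : Fin.tail x ∈ Fintype.piFinset A' :=
        Fintype.mem_piFinset.mpr fun i => Fintype.mem_piFinset.mp hx i.succ
      have hfx' : Polynomial.eval (x 0) (R.map (MvPolynomial.eval (Fin.tail x))) ≠ 0 := by
        rw [← hval (x 0) ha (Fin.tail x), Fin.cons_self_tail]
        exact hfx
      set p := R.map (MvPolynomial.eval (Fin.tail x)) with hp
      have hp0 : p ≠ 0 := fun h => hfx' (by rw [h, Polynomial.eval_zero])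
      refine ⟨p.natDegree, Finset.mem_filter.mpr ⟨?_, Fin.tail x, hu, ?_⟩⟩
      · have h1 : p.coeff p.natDegree ≠ 0 := Polynomial.leadingCoeff_ne_zero.mpr hp0
        rw [hp, Polynomial.coeff_map] at h1
        have : R.coeff p.natDegree ≠ 0 := fun h => h1 (by rw [h, map_zero])
        exact Finset.mem_range.mpr (Nat.lt_succ_of_le (Polynomial.le_natDegree_of_ne_zero this))
      · have h1 : p.coeff p.natDegree ≠ 0 := Polynomial.leadingCoeff_ne_zero.mpr hp0
        rwa [hp, Polynomial.coeff_map] at h1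
    set e := J.max' hJne with he
    have heJ : e ∈ J := J.max'_mem hJne
    obtain ⟨heR, u₀, hu₀, hgu₀⟩ := Finset.mem_filter.mp heJ
    have heR' : e ≤ R.natDegree := Nat.lt_succ_iff.mp (Finset.mem_range.mp heR)
    set g := R.coeff e with hg
    have hg0 : g ≠ 0 := fun h => hgu₀ (by rw [← hg] at *; rw [h, map_zero])
    have hemax : ∀ j, e < j → ∀ u ∈ Fintype.piFinset A', MvPolynomial.eval u (R.coeff j) = 0 := by
      intro j hj u hu
      by_contra h
      have hj' : j ∈ J := by
        refine Finset.mem_filter.mpr ⟨?_, u, hu, h⟩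
        have : R.coeff j ≠ 0 := fun h0 => h (by rw [h0, map_zero])
        exact Finset.mem_range.mpr (Nat.lt_succ_of_le (Polynomial.le_natDegree_of_ne_zero this))
      exact absurd (Finset.le_max' J j hj') (by omega)
    have he1 : e < c0 := lt_of_le_of_lt heR' hRdeg
    have he2 : e ≤ d := by have := hRWD e hg0; omega
    have hgdeg : g.totalDegree ≤ d - e := by
      have h := hRWD e hg0
      rw [← hg] at h
      omega
    -- apply induction hypothesis to g
    set U := (Fintype.piFinset A').filter (fun u => MvPolynomial.eval u g ≠ 0) with hU
    obtain ⟨y', hfeas', hy'U⟩ := IHn A' (fun i => hA1 i.succ) g (d - e) hgdeg ⟨u₀, hu₀, hgu₀⟩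
    -- counting
    set N := (Fintype.piFinset A).filter (fun x => MvPolynomial.eval x f ≠ 0) with hN
    have hfib : ∀ x ∈ N, Fin.tail x ∈ Fintype.piFinset A' := by
      intro x hx
      exact Fintype.mem_piFinset.mpr fun i =>
        Fintype.mem_piFinset.mp (Finset.mem_filter.mp hx).1 i.succ
    have hcard : N.card = ∑ u ∈ Fintype.piFinset A', (N.filter fun x => Fin.tail x = u).card :=
      Finset.card_eq_sum_card_fiberwise hfib
    have hfiber : ∀ u ∈ U, c0 - e ≤ (N.filter fun x => Fin.tail x = u).card := by
      intro u hu
      obtain ⟨hu', hgu⟩ := Finset.mem_filter.mp hu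
      set p := R.map (MvPolynomial.eval u) with hp
      have hpe : p.coeff e = MvPolynomial.eval u g := by rw [hp, Polynomial.coeff_map, hg]
      have hp0 : p ≠ 0 := fun h => hgu (by rw [← hpe, h, Polynomial.coeff_zero])
      have hpdeg : p.natDegree ≤ e := by
        rw [Polynomial.natDegree_le_iff_coeff_eq_zero]
        intro m hm
        rw [hp, Polynomial.coeff_map]
        exact hemax m hm u hu'
      set bad := (A 0).filter (fun a => Polynomial.eval a p = 0) with hbad
      have hbadsub : bad ⊆ p.roots.toFinset := by
        intro a ha
        obtain ⟨_, ha2⟩ := Finset.mem_filter.mp ha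
        exact Multiset.mem_toFinset.mpr (Polynomial.mem_roots'.mpr ⟨hp0, ha2⟩)
      have hbadcard : bad.card ≤ e :=
        le_trans (Finset.card_le_card hbadsub)
          (le_trans (Multiset.toFinset_card_le _) (le_trans (Polynomial.card_roots' p) hpdeg))
      set good := (A 0).filter (fun a => Polynomial.eval a p ≠ 0) with hgood
      have hgoodcard : c0 - e ≤ good.card := by
        have hsplit := Finset.card_filter_add_card_filter_not
          (s := A 0) (p := fun a => Polynomial.eval a p = 0)
        have hgb : (A 0).filter (fun a => ¬Polynomial.eval a p = 0) = good := rfl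
        rw [hgb, ← hbad] at hsplit
        omega
      have hsub : good.image (fun a => Fin.cons a u) ⊆ N.filter fun x => Fin.tail x = u := by
        intro x hx
        obtain ⟨a, ha, rfl⟩ := Finset.mem_image.mp hx
        obtain ⟨ha1, ha2⟩ := Finset.mem_filter.mp ha
        refine Finset.mem_filter.mpr ⟨Finset.mem_filter.mpr ⟨?_, ?_⟩, Fin.tail_cons _ _⟩
        · refine Fintype.mem_piFinset.mpr fun i => ?_
          refine Fin.cases ?_ (fun i => ?_) i
          · simpa using ha1
          · simpa using Fintype.mem_piFinset.mp hu' i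
        · rw [hval a ha1 u, ← hp]
          exact ha2
      have hinj : Function.Injective (fun a : K => Fin.cons a u : K → Fin (n+1) → K) := by
        intro a b hab
        have := congrFun hab 0
        simpa using this
      calc c0 - e ≤ good.card := hgoodcard
        _ = (good.image (fun a => Fin.cons a u)).card :=
          (Finset.card_image_of_injective good hinj).symm
        _ ≤ (N.filter fun x => Fin.tail x = u).card := Finset.card_le_card hsub
    have hcount : U.card * (c0 - e) ≤ N.card := by
      calc U.card * (c0 - e) = ∑ _u ∈ U, (c0 - e) := by rw [Finset.sum_const, smul_eq_mul]
        _ ≤ ∑ u ∈ U, (N.filter fun x => Fin.tail x = u).card := Finset.sum_le_sum hfiber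
        _ ≤ ∑ u ∈ Fintype.piFinset A', (N.filter fun x => Fin.tail x = u).card :=
          Finset.sum_le_sum_of_subset (Finset.filter_subset _ _)
        _ = N.card := hcard.symm
    -- assemble the feasible vector
    refine ⟨Fin.cons (c0 - e) y', ⟨?_, ?_⟩, ?_⟩
    · intro i
      refine Fin.cases ?_ (fun i => ?_) i
      · simp only [Fin.cons_zero]
        exact ⟨by omega, Nat.sub_le _ _⟩
      · simp only [Fin.cons_succ]
        exact hfeas'.1 i
    · rw [Fin.sum_univ_succ, Fin.sum_univ_succ, Fin.cons_zero]
      have h2 := hfeas'.2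
      have hde : d - e + e = d := Nat.sub_add_cancel he2
      simp only [Fin.cons_succ]
      simp only [hA'] at h2
      omega
    · rw [Fin.prod_univ_succ, Fin.cons_zero]
      simp only [Fin.cons_succ]
      calc (c0 - e) * ∏ i, y' i ≤ (c0 - e) * U.card := Nat.mul_le_mul_left _ hy'U
        _ = U.card * (c0 - e) := Nat.mul_comm _ _
        _ ≤ N.card := hcount

open MvPolynomial in
lemma membership {K : Type*} [Field K] [DecidableEq K] (n : ℕ) (A : Fin n → Finset K)
    (hA : ∀ i, 2 ≤ (A i).card) (k ℓ : ℕ) (hk : k < n) (hl1 : 1 ≤ ℓ)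
    (hl2 : ℓ ≤ (A ⟨k, hk⟩).card - 1) :
    ∃ f : MvPolynomial (Fin n) K,
      f.totalDegree ≤ (∑ i ∈ Finset.univ.filter (fun i : Fin n => (i : ℕ) < k),
        ((A i).card - 1)) + ℓ ∧
      (∃ x ∈ Fintype.piFinset A, MvPolynomial.eval x f ≠ 0) ∧
      ((Fintype.piFinset A).filter fun x => MvPolynomial.eval x f ≠ 0).card =
        ((A ⟨k, hk⟩).card - ℓ) *
          ∏ i ∈ Finset.univ.filter (fun i : Fin n => k < (i : ℕ)), (A i).card := by
  classical
  set Sk := univ.filter (fun i : Fin n => (i : ℕ) < k) with hSk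
  have hAne : ∀ i, (A i).Nonempty := fun i => Finset.card_pos.mp (by have := hA i; omega)
  set b : ∀ i : Fin n, K := fun i => (hAne i).choose with hb
  have hbmem : ∀ i, b i ∈ A i := fun i => (hAne i).choose_spec
  obtain ⟨B, hBsub, hBcard⟩ := Finset.exists_subset_card_eq
    (s := A ⟨k, hk⟩) (n := ℓ) (by have := hA ⟨k, hk⟩; omega)
  set fp : MvPolynomial (Fin n) K :=
    (∏ i ∈ Sk, ∏ a ∈ (A i).erase (b i), (X i - C a)) * ∏ a ∈ B, (X ⟨k, hk⟩ - C a) with hfp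
  have hXsubC : ∀ (i : Fin n) (a : K), (X i - C a : MvPolynomial (Fin n) K).totalDegree ≤ 1 := by
    intro i a
    refine le_trans (totalDegree_sub _ _) ?_
    simp [totalDegree_X, totalDegree_C]
  -- degree bound
  have hdeg : fp.totalDegree ≤ (∑ i ∈ Sk, ((A i).card - 1)) + ℓ := by
    refine le_trans (totalDegree_mul _ _) (add_le_add ?_ ?_)
    · refine le_trans (totalDegree_finset_prod _ _) ?_
      refine Finset.sum_le_sum fun i hi => ?_
      refine le_trans (totalDegree_finset_prod _ _) ?_
      calc ∑ a ∈ (A i).erase (b i), (X i - C a : MvPolynomial (Fin n) K).totalDegree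
          ≤ ∑ a ∈ (A i).erase (b i), 1 := Finset.sum_le_sum fun a _ => hXsubC i a
        _ = (A i).card - 1 := by
            rw [Finset.sum_const, smul_eq_mul, mul_one, Finset.card_erase_of_mem (hbmem i)]
    · refine le_trans (totalDegree_finset_prod _ _) ?_
      calc ∑ a ∈ B, (X (⟨k, hk⟩ : Fin n) - C a : MvPolynomial (Fin n) K).totalDegree
          ≤ ∑ a ∈ B, 1 := Finset.sum_le_sum fun a _ => hXsubC _ a
        _ = ℓ := by rw [Finset.sum_const, smul_eq_mul, mul_one, hBcard]
  -- evaluation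
  have heval : ∀ x : Fin n → K, MvPolynomial.eval x fp =
      (∏ i ∈ Sk, ∏ a ∈ (A i).erase (b i), (x i - a)) * ∏ a ∈ B, (x ⟨k, hk⟩ - a) := by
    intro x
    rw [hfp]
    simp [MvPolynomial.eval_prod]
  -- the non-vanishing set
  set D : Fin n → Finset K := fun i =>
    if (i : ℕ) < k then {b i} else if (i : ℕ) = k then A i \ B else A i with hD
  have hDsub : ∀ i, D i ⊆ A i := by
    intro i
    simp only [hD]
    split_ifs with h1 h2
    · intro t ht
      rw [Finset.mem_singleton] at ht
      exact ht ▸ hbmem i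
    · exact Finset.sdiff_subset
    · exact Finset.Subset.refl _
  have hDkk : D ⟨k, hk⟩ = A ⟨k, hk⟩ \ B := by simp [hD]
  have hfilter : (Fintype.piFinset A).filter (fun x => MvPolynomial.eval x fp ≠ 0)
      = Fintype.piFinset D := by
    ext x
    rw [Finset.mem_filter, Fintype.mem_piFinset, Fintype.mem_piFinset]
    constructor
    · rintro ⟨hx, hfx⟩
      rw [heval] at hfx
      obtain ⟨h1, h2⟩ := mul_ne_zero_iff.mp hfx
      rw [Finset.prod_ne_zero_iff] at h1 h2
      intro i
      simp only [hD]
      split_ifs with hik hik2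
      · have h1i := Finset.prod_ne_zero_iff.mp (h1 i (by simp [hSk, hik]))
        rw [Finset.mem_singleton]
        by_contra hne
        exact h1i (x i) (Finset.mem_erase.mpr ⟨hne, hx i⟩) (by rw [sub_self])
      · rw [Finset.mem_sdiff]
        refine ⟨hx i, fun hxB => ?_⟩
        have hieq : i = ⟨k, hk⟩ := Fin.ext hik2
        exact h2 (x i) (hieq ▸ hxB) (by rw [hieq, sub_self])
      · exact hx i
    · intro hx
      have hxA : ∀ i, x i ∈ A i := fun i => hDsub i (hx i)
      refine ⟨fun i => hxA i, ?_⟩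
      rw [heval]
      refine mul_ne_zero ?_ ?_
      · rw [Finset.prod_ne_zero_iff]
        intro i hi
        rw [Finset.prod_ne_zero_iff]
        intro a ha hxa
        rw [sub_eq_zero] at hxa
        have hik : (i : ℕ) < k := by simpa [hSk] using hi
        have hxD := hx i
        simp only [hD] at hxD
        simp only [if_pos hik] at hxD
        rw [Finset.mem_singleton] at hxD
        obtain ⟨hane, _⟩ := Finset.mem_erase.mp ha
        exact hane (by rw [← hxa, hxD])
      · rw [Finset.prod_ne_zero_iff]
        intro a ha hxa
        rw [sub_eq_zero] at hxa
        have hxD := hx ⟨k, hk⟩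
        rw [hDkk] at hxD
        exact (Finset.mem_sdiff.mp hxD).2 (hxa ▸ ha)
  have hDk : (D ⟨k, hk⟩).card = (A ⟨k, hk⟩).card - ℓ := by
    rw [hDkk, Finset.card_sdiff_of_subset hBsub, hBcard]
  have hcard : (Fintype.piFinset D).card =
      ((A ⟨k, hk⟩).card - ℓ) *
        ∏ i ∈ Finset.univ.filter (fun i : Fin n => k < (i : ℕ)), (A i).card := by
    rw [Fintype.card_piFinset]
    rw [← Finset.prod_filter_mul_prod_filter_not univ (fun i : Fin n => (i : ℕ) < k)]
    have hpart1 : ∏ i ∈ Sk, (D i).card = 1 := by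
      refine Finset.prod_eq_one fun i hi => ?_
      have hik : (i : ℕ) < k := by simpa [hSk] using hi
      simp only [hD]
      simp [if_pos hik]
    have hkTk : (⟨k, hk⟩ : Fin n) ∈ univ.filter (fun i : Fin n => ¬ (i : ℕ) < k) := by simp
    have hpart2 : ∏ i ∈ univ.filter (fun i : Fin n => ¬ (i : ℕ) < k), (D i).card
        = ((A ⟨k, hk⟩).card - ℓ) *
          ∏ i ∈ Finset.univ.filter (fun i : Fin n => k < (i : ℕ)), (A i).card := by
      rw [← Finset.mul_prod_erase _ _ hkTk, hDk, erase_Tk hk]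
      congr 1
      refine Finset.prod_congr rfl fun i hi => ?_
      have hik : k < (i : ℕ) := by simpa using hi
      simp only [hD]
      simp only [if_neg (by omega : ¬ (i : ℕ) < k), if_neg (by omega : ¬ (i : ℕ) = k)]
    rw [← hSk, hpart1, one_mul, hpart2]
  have hpos : 0 < (Fintype.piFinset D).card := by
    rw [hcard]
    have h1 : 0 < (A ⟨k, hk⟩).card - ℓ := by have := hA ⟨k, hk⟩; omega
    have h2 : 0 < ∏ i ∈ Finset.univ.filter (fun i : Fin n => k < (i : ℕ)), (A i).card := by
      refine Finset.prod_pos fun i _ => ?_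
      have := hA i; omega
    exact Nat.mul_pos h1 h2
  obtain ⟨x, hx⟩ := Finset.card_pos.mp hpos
  rw [← hfilter] at hx
  obtain ⟨hx1, hx2⟩ := Finset.mem_filter.mp hx
  exact ⟨fp, hdeg, ⟨x, hx1, hx2⟩, by rw [hfilter, hcard]⟩

theorem stmt_9 {K : Type*} [Field K] [DecidableEq K] (n : ℕ) (A : Fin n → Finset K)
    (hA : ∀ i, 2 ≤ (A i).card)
    (hmono : ∀ i j : Fin n, i ≤ j → (A i).card ≤ (A j).card)
    (d k ℓ : ℕ) (hd1 : 1 ≤ d)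
    (hd2 : d ≤ (∑ i, ((A i).card - 1)) - 1)
    (hk : k < n)
    (hdecomp : d = (∑ i ∈ Finset.univ.filter (fun i : Fin n => (i : ℕ) < k),
        ((A i).card - 1)) + ℓ)
    (hl1 : 1 ≤ ℓ) (hl2 : ℓ ≤ (A ⟨k, hk⟩).card - 1) :
    IsLeast
      {w : ℕ | ∃ f : MvPolynomial (Fin n) K, f.totalDegree ≤ d ∧
        (∃ x ∈ Fintype.piFinset A, MvPolynomial.eval x f ≠ 0) ∧
        w = ((Fintype.piFinset A).filter fun x => MvPolynomial.eval x f ≠ 0).card}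
      (((A ⟨k, hk⟩).card - ℓ) *
        ∏ i ∈ Finset.univ.filter (fun i : Fin n => k < (i : ℕ)), (A i).card) := by
  constructor
  · -- membership
    obtain ⟨f, hdeg, hnz, hcard⟩ := membership n A hA k ℓ hk hl1 hl2
    exact ⟨f, by rw [hdecomp]; exact hdeg, hnz, hcard.symm⟩
  · -- lower bound
    rintro w ⟨f, hdeg, hnz, rfl⟩
    obtain ⟨y, hfeas, hle⟩ := AF n A (fun i => by have := hA i; omega) f d hdeg hnz
    have hl' : ℓ + 1 ≤ (A ⟨k, hk⟩).card := by have := hA ⟨k, hk⟩; omega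
    have hfeas' : feasibleKL (fun i => (A i).card)
        ((∑ i ∈ Finset.univ.filter (fun i : Fin n => (i : ℕ) < k),
          ((fun i => (A i).card) i - 1)) + ℓ) y := by
      rw [← hdecomp] at *
      exact hfeas
    have := value_ge (fun i => (A i).card) k ℓ hk hmono hl' y hfeas'
    exact le_trans this hle
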